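/- arXiv:1610.04395 — 4 statements merged into one kernel-verified Lean document; each statement's English description precedes it below -/
import Mathlib

section
/- Let n ≥ 1, let M be a symmetric positive definite real n×n matrix, and let Δ_d ∈ ℝⁿ be a constant vector. Let k_p, k_d, k_I > 0 be gains and let κ ∈ (0,2), δ := |κ − 1|, and suppose 0 < k_I < k_d³(1 − δ²) and k_p > max{k₁, k₂, 2κ k_d²}, where k₁ := (k_I/(2k_d))(√(1 + 16κ²k_d²/k_I) − 1) and k₂ := (k_I²/(2k_d⁴))(1 + √(1 + 4k_d³(k_I² + 4κk_d³(1 + κk_d³))/k_I³)). Then every twice continuously differentiable solution (E, E_I) : [0,∞) → ℝⁿ × ℝⁿ of the closed-loop PID error dynamics Ė_I(t) = E(t), M Ë(t) = −M(k_p E(t) + k_d Ė(t) + k_I E_I(t)) + Δ_d converges exponentially to the equilibrium (E, Ė, E_I) = (0, 0, M⁻¹Δ_d/k_I): there exist constants C > 0 and a > 0 (depending on the initial condition) such that ‖E(t)‖ + ‖Ė(t)‖ + ‖E_I(t) − M⁻¹Δ_d/k_I‖ ≤ C e^{−a t} for all t ≥ 0. -/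
open scoped RealInnerProductSpace

private lemma pid_aux_lower (kd kp kI ε nz ne nw ze zw ew : ℝ)
    (hkd : 0 < kd) (hkp : 0 < kp) (hkI : 0 < kI) (hε0 : 0 < ε)
    (hε2 : 4*kp*(kI+1)*ε ≤ kI*(kd*kp - kI))
    (hε3 : ε ≤ 1/4)
    (hε4 : 2*(kd+2)*(kd*kp+kI)*ε ≤ kp*(kd*kp - kI))
    (hze : -(nz*ne) ≤ ze) (hzw : -(nz*nw) ≤ zw) (hew : ew ≤ ne*nw) :
    kI*(kd*kp-kI)/(8*kp)*nz^2 + kp*(kd*kp-kI)/(4*(kd*kp+kI))*ne^2 + (1/4)*nw^2 ≤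
      (kd*kI + ε*(kp-kI))/2*nz^2 + (kp - (kd+1)*ε)/2*ne^2 + (1/2)*nw^2
        + kI*ze + ε*zw - ε*ew := by
  have hkp' : kp ≠ 0 := hkp.ne'
  have hden : kd*kp+kI ≠ 0 := by positivity
  rw [← sub_nonneg]
  have hA : 0 ≤ 8*kp*(kd*kp+kI)*kI*(ze + nz*ne) := by
    apply mul_nonneg (by positivity); linarith
  have hB : 0 ≤ 8*kp*(kd*kp+kI)*ε*(zw + nz*nw) := by
    apply mul_nonneg (by positivity); linarith
  have hC : 0 ≤ 8*kp*(kd*kp+kI)*ε*(ne*nw - ew) := by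
    apply mul_nonneg (by positivity); linarith
  have hDq : 0 ≤ 2*kI*((kd*kp+kI)*nz - 2*kp*ne)^2 := by positivity
  have hEq : 0 ≤ 4*kp*(kd*kp+kI)*ε*(nz-nw)^2 := by positivity
  have hF : 0 ≤ 4*kp*(kd*kp+kI)*ε*(ne-nw)^2 := by positivity
  have hG : 0 ≤ (kd*kp+kI)*(kI*(kd*kp-kI) - 4*kp*(kI+1)*ε)*nz^2 := by
    apply mul_nonneg (mul_nonneg (by positivity) (by linarith)) (sq_nonneg _)
  have hH : 0 ≤ 4*kp^2*ε*(kd*kp+kI)*nz^2 := by positivity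
  have hI : 0 ≤ (kp*(kd*kp-kI) - 2*(kd+2)*(kd*kp+kI)*ε)*(2*kp)*ne^2 := by
    apply mul_nonneg (mul_nonneg (by linarith) (by positivity)) (sq_nonneg _)
  have hJ : 0 ≤ 2*kp*(kd*kp+kI)*(1-4*ε)*nw^2 := by
    apply mul_nonneg (mul_nonneg (by positivity) (by linarith)) (sq_nonneg _)
  have key : 0 ≤ (8*kp*(kd*kp+kI)) *
      (((kd*kI + ε*(kp-kI))/2*nz^2 + (kp - (kd+1)*ε)/2*ne^2 + (1/2)*nw^2
        + kI*ze + ε*zw - ε*ew) -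
       (kI*(kd*kp-kI)/(8*kp)*nz^2 + kp*(kd*kp-kI)/(4*(kd*kp+kI))*ne^2 + (1/4)*nw^2)) := by
    have expand : (8*kp*(kd*kp+kI)) *
      (((kd*kI + ε*(kp-kI))/2*nz^2 + (kp - (kd+1)*ε)/2*ne^2 + (1/2)*nw^2
        + kI*ze + ε*zw - ε*ew) -
       (kI*(kd*kp-kI)/(8*kp)*nz^2 + kp*(kd*kp-kI)/(4*(kd*kp+kI))*ne^2 + (1/4)*nw^2)) =
      8*kp*(kd*kp+kI)*kI*(ze + nz*ne) + 8*kp*(kd*kp+kI)*ε*(zw + nz*nw)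
      + 8*kp*(kd*kp+kI)*ε*(ne*nw - ew) + 2*kI*((kd*kp+kI)*nz - 2*kp*ne)^2
      + 4*kp*(kd*kp+kI)*ε*(nz-nw)^2 + 4*kp*(kd*kp+kI)*ε*(ne-nw)^2
      + (kd*kp+kI)*(kI*(kd*kp-kI) - 4*kp*(kI+1)*ε)*nz^2
      + 4*kp^2*ε*(kd*kp+kI)*nz^2
      + (kp*(kd*kp-kI) - 2*(kd+2)*(kd*kp+kI)*ε)*(2*kp)*ne^2
      + 2*kp*(kd*kp+kI)*(1-4*ε)*nw^2 := by
      field_simp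
      ring
    rw [expand]
    linarith
  by_contra hcon
  push_neg at hcon
  have hpos : (0:ℝ) < 8*kp*(kd*kp+kI) := by positivity
  nlinarith [mul_pos hpos (neg_pos.mpr (sub_neg.mpr hcon))]

private lemma pid_aux_upper (kd kp kI ε nz ne nw ze zw ew : ℝ)
    (hα : 0 ≤ kd*kI + ε*(kp-kI)) (hβ : 0 ≤ kp - (kd+1)*ε)
    (hkI : 0 ≤ kI) (hε : 0 ≤ ε)
    (hze : ze ≤ nz*ne) (hzw : zw ≤ nz*nw) (hew : -(ne*nw) ≤ ew) :
    (kd*kI + ε*(kp-kI))/2*nz^2 + (kp - (kd+1)*ε)/2*ne^2 + (1/2)*nw^2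
        + kI*ze + ε*zw - ε*ew ≤
      (((kd*kI + ε*(kp-kI)) + (kp - (kd+1)*ε) + 1)/2 + kI + 2*ε) * (nz^2+ne^2+nw^2) := by
  nlinarith [mul_nonneg hkI (sq_nonneg (nz-ne)), mul_nonneg hε (sq_nonneg (nz-nw)),
    mul_nonneg hε (sq_nonneg (ne-nw)), mul_nonneg hα (sq_nonneg ne),
    mul_nonneg hα (sq_nonneg nw), mul_nonneg hβ (sq_nonneg nz),
    mul_nonneg hβ (sq_nonneg nw), mul_nonneg hkI (sq_nonneg nw),
    mul_nonneg hε (sq_nonneg nz), mul_nonneg hε (sq_nonneg ne),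
    sq_nonneg nz, sq_nonneg ne, sq_nonneg nw]

set_option maxHeartbeats 2000000 in
/-- **PID control of a double integrator on ℝⁿ.**
For a symmetric positive definite mass matrix `M`, a constant disturbance `Δd`,
and PID gains satisfying the paper's gain conditions (with `μ = λ = 1`), every
twice continuously differentiable solution of the closed-loop error dynamics
`Ė_I = E`, `MË = −M(k_p E + k_d Ė + k_I E_I) + Δd`
converges exponentially to the equilibrium `(0, 0, M⁻¹Δd/k_I)`. -/
theorem pid_Rn_exponential_convergence
    (n : ℕ) (hn : 1 ≤ n)
    (M : Matrix (Fin n) (Fin n) ℝ) (hM : M.PosDef)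
    (Δd : EuclideanSpace ℝ (Fin n))
    (kp kd kI κ : ℝ)
    (hkp : 0 < kp) (hkd : 0 < kd) (hkI0 : 0 < kI)
    (hκ0 : 0 < κ) (hκ2 : κ < 2)
    (δ : ℝ) (hδ : δ = |κ - 1|)
    (hkI : kI < kd ^ 3 * (1 - δ ^ 2))
    (k₁ k₂ : ℝ)
    (hk₁ : k₁ = kI / (2 * kd) * (Real.sqrt (1 + 16 * κ ^ 2 * kd ^ 2 / kI) - 1))
    (hk₂ : k₂ = kI ^ 2 / (2 * kd ^ 4) *
      (1 + Real.sqrt (1 + 4 * kd ^ 3 * (kI ^ 2 + 4 * κ * kd ^ 3 * (1 + κ * kd ^ 3)) / kI ^ 3)))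
    (hkpbig : max (max k₁ k₂) (2 * κ * kd ^ 2) < kp)
    (E EI : ℝ → EuclideanSpace ℝ (Fin n))
    (hE : ContDiff ℝ 2 E) (hEI : ContDiff ℝ 2 EI)
    (hode₁ : ∀ t ≥ (0 : ℝ), deriv EI t = E t)
    (hode₂ : ∀ t ≥ (0 : ℝ),
      Matrix.toEuclideanLin M (deriv (deriv E) t) =
        -(Matrix.toEuclideanLin M (kp • E t + kd • deriv E t + kI • EI t)) + Δd) :
    ∃ C > (0 : ℝ), ∃ a > (0 : ℝ), ∀ t ≥ (0 : ℝ),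
      ‖E t‖ + ‖deriv E t‖ + ‖EI t - kI⁻¹ • (Matrix.toEuclideanLin M⁻¹ Δd)‖ ≤
        C * Real.exp (-a * t) := by
  -- ### Gain arithmetic
  have hkp2 : 2 * κ * kd ^ 2 < kp := lt_of_le_of_lt (le_max_right _ _) hkpbig
  have hD : 0 < kd * kp - kI := by
    have hδ2 : δ ^ 2 = (κ - 1) ^ 2 := by rw [hδ, sq_abs]
    rw [hδ2] at hkI
    nlinarith [mul_nonneg (mul_nonneg hκ0.le hκ0.le) (pow_pos hkd 3).le,
      mul_lt_mul_of_pos_right hkp2 hkd, pow_pos hkd 3]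
  -- ### Smoothness facts
  have hEdiff : Differentiable ℝ E := hE.differentiable (by simp)
  have hEIdiff : Differentiable ℝ EI := hEI.differentiable (by simp)
  have hv1 : ContDiff ℝ 1 (deriv E) := by
    have h2 : ContDiff ℝ (1+1 : ℕ) E := by exact_mod_cast hE
    exact (contDiff_succ_iff_deriv.mp (by exact_mod_cast h2)).2.2
  have hvdiff : Differentiable ℝ (deriv E) := hv1.differentiable (by simp)
  have hvcont : Continuous (deriv E) := hv1.continuous
  -- ### Matrix inversion of the ODE
  have hdet : IsUnit M.det := isUnit_iff_ne_zero.mpr hM.det_pos.ne'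
  have hMM : ∀ x : EuclideanSpace ℝ (Fin n),
      Matrix.toEuclideanLin M⁻¹ (Matrix.toEuclideanLin M x) = x := by
    intro x
    rw [Matrix.toEuclideanLin_apply, Matrix.toEuclideanLin_apply]
    simp [Matrix.mulVec_mulVec, Matrix.nonsing_inv_mul M hdet, Matrix.one_mulVec]
  have hdd : ∀ t, 0 ≤ t → deriv (deriv E) t =
      -(kp • E t + kd • deriv E t + kI • EI t) + Matrix.toEuclideanLin M⁻¹ Δd := by
    intro t ht
    have h := congrArg (Matrix.toEuclideanLin M⁻¹) (hode₂ t ht)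
    rwa [hMM, map_add, map_neg, hMM] at h
  -- ### State variables
  set c0 : EuclideanSpace ℝ (Fin n) := kI⁻¹ • (Matrix.toEuclideanLin M⁻¹ Δd) with hc0
  set z : ℝ → EuclideanSpace ℝ (Fin n) := fun t => EI t - c0 with hz
  set w : ℝ → EuclideanSpace ℝ (Fin n) := fun t => deriv E t + kd • E t with hw
  have hkIc0 : kI • c0 = Matrix.toEuclideanLin M⁻¹ Δd := by
    rw [hc0, smul_smul, mul_inv_cancel₀ hkI0.ne', one_smul]
  have hzD : ∀ t, 0 ≤ t → HasDerivAt z (E t) t := by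
    intro t ht
    have h := (hEIdiff t).hasDerivAt
    rw [hode₁ t ht] at h
    simpa [hz] using h.sub_const c0
  have hED : ∀ t : ℝ, HasDerivAt E (deriv E t) t := fun t => (hEdiff t).hasDerivAt
  have hvD : ∀ t, 0 ≤ t →
      HasDerivAt (deriv E) (-(kp • E t) - kd • deriv E t - kI • z t) t := by
    intro t ht
    have h := (hvdiff t).hasDerivAt
    rw [hdd t ht] at h
    refine h.congr_deriv ?_
    simp only [hz, smul_sub, hkIc0]
    abel
  have hwD : ∀ t, 0 ≤ t → HasDerivAt w (-(kp • E t) - kI • z t) t := by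
    intro t ht
    have h2 : HasDerivAt w (-(kp • E t) - kd • deriv E t - kI • z t + kd • deriv E t) t :=
      (hvD t ht).add ((hED t).const_smul kd)
    convert h2 using 1
    abel
  -- ### choice of ε and its bounds
  obtain ⟨ε, hε0, hε1', hε2', hε4', hε3⟩ : ∃ ε : ℝ, 0 < ε ∧
      2*(kd^2+kd+kp)*ε ≤ kd*kp-kI ∧ 4*kp*(kI+1)*ε ≤ kI*(kd*kp-kI) ∧
      2*(kd+2)*(kd*kp+kI)*ε ≤ kp*(kd*kp-kI) ∧ ε ≤ 1/4 := by
    refine ⟨min (min ((kd*kp-kI)/(2*(kd^2+kd+kp))) (kI*(kd*kp-kI)/(4*kp*(kI+1))))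
      (min (kp*(kd*kp-kI)/(2*(kd+2)*(kd*kp+kI))) (1/4)), ?_, ?_, ?_, ?_, ?_⟩
    · exact lt_min (lt_min (by positivity) (by positivity)) (lt_min (by positivity) (by norm_num))
    · have h : min (min ((kd*kp-kI)/(2*(kd^2+kd+kp))) (kI*(kd*kp-kI)/(4*kp*(kI+1))))
          (min (kp*(kd*kp-kI)/(2*(kd+2)*(kd*kp+kI))) (1/4)) ≤ (kd*kp-kI)/(2*(kd^2+kd+kp)) :=
        le_trans (min_le_left _ _) (min_le_left _ _)
      rw [le_div_iff₀ (by positivity)] at h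
      linarith
    · have h : min (min ((kd*kp-kI)/(2*(kd^2+kd+kp))) (kI*(kd*kp-kI)/(4*kp*(kI+1))))
          (min (kp*(kd*kp-kI)/(2*(kd+2)*(kd*kp+kI))) (1/4)) ≤ kI*(kd*kp-kI)/(4*kp*(kI+1)) :=
        le_trans (min_le_left _ _) (min_le_right _ _)
      rw [le_div_iff₀ (by positivity)] at h
      linarith
    · have h : min (min ((kd*kp-kI)/(2*(kd^2+kd+kp))) (kI*(kd*kp-kI)/(4*kp*(kI+1))))
          (min (kp*(kd*kp-kI)/(2*(kd+2)*(kd*kp+kI))) (1/4)) ≤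
            kp*(kd*kp-kI)/(2*(kd+2)*(kd*kp+kI)) :=
        le_trans (min_le_right _ _) (min_le_left _ _)
      rw [le_div_iff₀ (by positivity)] at h
      linarith
    · exact le_trans (min_le_right _ _) (min_le_right _ _)
  clear hk₁ hk₂ hkpbig hδ hkI hkp2 hκ0 hκ2 hn hM hdet
  have hεkd : 2*ε ≤ kd := by
    by_contra h
    push_neg at h
    have h1 := mul_pos hkp (show (0:ℝ) < 2*ε - kd by linarith)
    have h2 : 0 ≤ ε*kd*kd := by positivity
    have h3 : 0 ≤ ε*kd := by positivity
    nlinarith [h1, h2, h3, hε1', hkI0]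
  have hεkp : 2*(kd+2)*ε ≤ kp := by
    by_contra h
    push_neg at h
    have h1 := mul_pos (show (0:ℝ) < kd*kp+kI by positivity)
      (show (0:ℝ) < 2*(kd+2)*ε - kp by linarith)
    linarith [h1, hε4', mul_pos hkp hkI0]
  have hα0 : 0 ≤ kd*kI + ε*(kp-kI) := by
    nlinarith [mul_le_mul_of_nonneg_right hεkd hkI0.le, mul_nonneg hε0.le hkp.le]
  have hβ0 : 0 ≤ kp - (kd+1)*ε := by
    nlinarith [hεkp, mul_nonneg hε0.le hkd.le, hε0.le]
  -- ### Lyapunov function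
  set V : ℝ → ℝ := fun t =>
      (kd*kI + ε*(kp-kI))/2 * ⟪z t, z t⟫ + (kp - (kd+1)*ε)/2 * ⟪E t, E t⟫
      + (1/2) * ⟪w t, w t⟫ + kI * ⟪z t, E t⟫ + ε * ⟪z t, w t⟫
      - ε * ⟪E t, w t⟫ with hV
  have hVD : ∀ t, 0 ≤ t → HasDerivAt V
      (-(kI*ε) * ⟪z t, z t⟫ + (-(kd*kp-kI) + ε*(kd^2+kd+kp)) * ⟪E t, E t⟫
        - ε * ⟪w t, w t⟫) t := by
    intro t ht
    have hz' := hzD t ht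
    have hE' : HasDerivAt E (w t - kd • E t) t := by
      convert hED t using 1
      simp only [hw]
      abel
    have hw' := hwD t ht
    have d1 := hz'.inner ℝ hE'
    have d2 := hz'.inner ℝ hw'
    have d3 := hE'.inner ℝ hw'
    have d4 := hz'.inner ℝ hz'
    have d5 := hE'.inner ℝ hE'
    have d6 := hw'.inner ℝ hw'
    have dsum := ((((d4.const_mul ((kd*kI + ε*(kp-kI))/2)).add
        (d5.const_mul ((kp - (kd+1)*ε)/2))).add
        (d6.const_mul ((1:ℝ)/2))).add (d1.const_mul kI)).add (d2.const_mul ε) |>.sub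
        (d3.const_mul ε)
    refine dsum.congr_deriv ?_
    simp only [inner_sub_left, inner_sub_right, inner_neg_left, inner_neg_right,
      real_inner_smul_left, real_inner_smul_right]
    rw [real_inner_comm (E t) (z t), real_inner_comm (w t) (z t),
      real_inner_comm (w t) (E t)]
    ring
  -- ### quadratic bounds
  obtain ⟨m₁, hm₁0, em1, em2, em3⟩ : ∃ m : ℝ, 0 < m ∧ m ≤ kI*(kd*kp-kI)/(8*kp) ∧
      m ≤ kp*(kd*kp-kI)/(4*(kd*kp+kI)) ∧ m ≤ 1/4 :=
    ⟨min (min (kI*(kd*kp-kI)/(8*kp)) (kp*(kd*kp-kI)/(4*(kd*kp+kI)))) (1/4),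
      lt_min (lt_min (by positivity) (by positivity)) (by norm_num),
      le_trans (min_le_left _ _) (min_le_left _ _),
      le_trans (min_le_left _ _) (min_le_right _ _), min_le_right _ _⟩
  obtain ⟨K, hKdef⟩ : ∃ K : ℝ, K = ((kd*kI + ε*(kp-kI)) + (kp - (kd+1)*ε) + 1)/2 + kI + 2*ε :=
    ⟨_, rfl⟩
  have hK0 : 0 < K := by rw [hKdef]; nlinarith [hα0, hβ0, hε0, hkI0]
  have hlow : ∀ t : ℝ, m₁ * (‖z t‖^2 + ‖E t‖^2 + ‖w t‖^2) ≤ V t := by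
    intro t
    have L := pid_aux_lower kd kp kI ε ‖z t‖ ‖E t‖ ‖w t‖
      ⟪z t, E t⟫ ⟪z t, w t⟫ ⟪E t, w t⟫ hkd hkp hkI0 hε0 hε2' hε3 hε4'
      (neg_le_of_abs_le (abs_real_inner_le_norm _ _))
      (neg_le_of_abs_le (abs_real_inner_le_norm _ _))
      (real_inner_le_norm _ _)
    have hVt : V t = (kd*kI + ε*(kp-kI))/2*‖z t‖^2 + (kp - (kd+1)*ε)/2*‖E t‖^2
        + (1/2)*‖w t‖^2 + kI*⟪z t, E t⟫ + ε*⟪z t, w t⟫ - ε*⟪E t, w t⟫ := by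
      simp only [hV, real_inner_self_eq_norm_sq]
    rw [hVt]
    have p1 := mul_le_mul_of_nonneg_right em1 (sq_nonneg ‖z t‖)
    have p2 := mul_le_mul_of_nonneg_right em2 (sq_nonneg ‖E t‖)
    have p3 := mul_le_mul_of_nonneg_right em3 (sq_nonneg ‖w t‖)
    linarith
  have hup : ∀ t : ℝ, V t ≤ K * (‖z t‖^2 + ‖E t‖^2 + ‖w t‖^2) := by
    intro t
    have L := pid_aux_upper kd kp kI ε ‖z t‖ ‖E t‖ ‖w t‖
      ⟪z t, E t⟫ ⟪z t, w t⟫ ⟪E t, w t⟫ hα0 hβ0 hkI0.le hε0.le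
      (real_inner_le_norm _ _) (real_inner_le_norm _ _)
      (neg_le_of_abs_le (abs_real_inner_le_norm _ _))
    have hVt : V t = (kd*kI + ε*(kp-kI))/2*‖z t‖^2 + (kp - (kd+1)*ε)/2*‖E t‖^2
        + (1/2)*‖w t‖^2 + kI*⟪z t, E t⟫ + ε*⟪z t, w t⟫ - ε*⟪E t, w t⟫ := by
      simp only [hV, real_inner_self_eq_norm_sq]
    rw [hVt, hKdef]
    linarith [L]
  have hVnonneg : ∀ t : ℝ, 0 ≤ V t := fun t => le_trans (by positivity) (hlow t)
  -- ### decay of the derivative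
  obtain ⟨m₂, hm₂0, f1, f2, f3⟩ : ∃ m : ℝ, 0 < m ∧ m ≤ kI*ε ∧ m ≤ (kd*kp-kI)/2 ∧ m ≤ ε :=
    ⟨min (min (kI*ε) ((kd*kp-kI)/2)) ε,
      lt_min (lt_min (by positivity) (by positivity)) hε0,
      le_trans (min_le_left _ _) (min_le_left _ _),
      le_trans (min_le_left _ _) (min_le_right _ _), min_le_right _ _⟩
  obtain ⟨a, hadef⟩ : ∃ a : ℝ, a = m₂ / (2*K) := ⟨_, rfl⟩
  have ha0 : 0 < a := by rw [hadef]; positivity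
  have h2a : 2*a = m₂/K := by rw [hadef]; field_simp
  have hVdecay : ∀ t, 0 ≤ t →
      (-(kI*ε) * ⟪z t, z t⟫ + (-(kd*kp-kI) + ε*(kd^2+kd+kp)) * ⟪E t, E t⟫
        - ε * ⟪w t, w t⟫) ≤ -(2*a) * V t := by
    intro t ht
    have hSig : -(kI*ε) * ⟪z t, z t⟫ + (-(kd*kp-kI) + ε*(kd^2+kd+kp)) * ⟪E t, E t⟫
        - ε * ⟪w t, w t⟫ ≤ -m₂ * (‖z t‖^2 + ‖E t‖^2 + ‖w t‖^2) := by
      simp only [real_inner_self_eq_norm_sq]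
      have p1 := mul_le_mul_of_nonneg_right f1 (sq_nonneg ‖z t‖)
      have p2 := mul_le_mul_of_nonneg_right f3 (sq_nonneg ‖w t‖)
      have hc : -(kd*kp-kI) + ε*(kd^2+kd+kp) ≤ -m₂ := by linarith [f2, hε1']
      have p3 := mul_le_mul_of_nonneg_right hc (sq_nonneg ‖E t‖)
      nlinarith [sq_nonneg ‖E t‖]
    have hKV : m₂/K * V t ≤ m₂ * (‖z t‖^2 + ‖E t‖^2 + ‖w t‖^2) := by
      have h := mul_le_mul_of_nonneg_left (hup t) (by positivity : (0:ℝ) ≤ m₂/K)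
      calc m₂/K * V t ≤ m₂/K * (K * (‖z t‖^2 + ‖E t‖^2 + ‖w t‖^2)) := h
        _ = m₂ * (‖z t‖^2 + ‖E t‖^2 + ‖w t‖^2) := by
            field_simp
    rw [h2a]
    linarith
  -- ### Gronwall via antitonicity
  set g : ℝ → ℝ := fun t => V t * Real.exp (2*a*t) with hg
  have hgD : ∀ t, 0 ≤ t → HasDerivAt g
      ((-(kI*ε) * ⟪z t, z t⟫ + (-(kd*kp-kI) + ε*(kd^2+kd+kp)) * ⟪E t, E t⟫
        - ε * ⟪w t, w t⟫) * Real.exp (2*a*t)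
        + V t * (Real.exp (2*a*t) * (2*a))) t := by
    intro t ht
    have hexp : HasDerivAt (fun s : ℝ => Real.exp (2*a*s)) (Real.exp (2*a*t) * (2*a)) t := by
      have h1 : HasDerivAt (fun s : ℝ => 2*a*s) (2*a) t := by
        simpa using (hasDerivAt_id t).const_mul (2*a)
      exact h1.exp
    exact (hVD t ht).mul hexp
  have hzc : Continuous z := by
    rw [hz]; exact hEI.continuous.sub continuous_const
  have hwc : Continuous w := by
    rw [hw]; exact hvcont.add (hE.continuous.const_smul kd)
  have hVc : Continuous V := by
    rw [hV]
    apply Continuous.sub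
    apply Continuous.add
    apply Continuous.add
    apply Continuous.add
    apply Continuous.add
    · exact continuous_const.mul (hzc.inner hzc)
    · exact continuous_const.mul (hE.continuous.inner hE.continuous)
    · exact continuous_const.mul (hwc.inner hwc)
    · exact continuous_const.mul (hzc.inner hE.continuous)
    · exact continuous_const.mul (hzc.inner hwc)
    · exact continuous_const.mul (hE.continuous.inner hwc)
  have hganti : AntitoneOn g (Set.Ici (0:ℝ)) := by
    apply antitoneOn_of_deriv_nonpos (convex_Ici 0)
    · exact (hVc.mul ((Real.continuous_exp.comp (continuous_const.mul continuous_id)))).continuousOn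
    · intro x hx
      rw [interior_Ici] at hx
      exact ((hgD x (le_of_lt hx)).differentiableAt).differentiableWithinAt
    · intro x hx
      rw [interior_Ici] at hx
      rw [(hgD x hx.le).deriv]
      have h5 := mul_le_mul_of_nonneg_right (hVdecay x hx.le) (Real.exp_pos (2*a*x)).le
      nlinarith [h5, Real.exp_pos (2*a*x), hVnonneg x]
  have hVexp : ∀ t, 0 ≤ t → V t ≤ V 0 * Real.exp (-(2*a*t)) := by
    intro t ht
    have hgt : V t * Real.exp (2*a*t) ≤ V 0 := by
      have h := hganti Set.self_mem_Ici (Set.mem_Ici.mpr ht) ht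
      simpa [hg] using h
    rw [Real.exp_neg, ← div_eq_mul_inv, le_div_iff₀ (Real.exp_pos _)]
    exact hgt
  -- ### final assembly
  obtain ⟨R, hR⟩ : ∃ R : ℝ, R = Real.sqrt (V 0 / m₁) := ⟨_, rfl⟩
  have hR0 : 0 ≤ R := by rw [hR]; exact Real.sqrt_nonneg _
  have hRsq : R^2 = V 0 / m₁ := by
    rw [hR]; exact Real.sq_sqrt (div_nonneg (hVnonneg 0) hm₁0.le)
  have hkey : ∀ t, 0 ≤ t → ∀ x : ℝ, 0 ≤ x →
      x^2 ≤ ‖z t‖^2 + ‖E t‖^2 + ‖w t‖^2 → x ≤ R * Real.exp (-a*t) := by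
    intro t ht x hx hxs
    have h1 : m₁ * x^2 ≤ V 0 * Real.exp (-(2*a*t)) :=
      le_trans (le_trans (mul_le_mul_of_nonneg_left hxs hm₁0.le) (hlow t)) (hVexp t ht)
    have hexp2 : Real.exp (-(2*a*t)) = Real.exp (-a*t) * Real.exp (-a*t) := by
      rw [← Real.exp_add]; congr 1; ring
    have h2 : x^2 ≤ (R * Real.exp (-a*t))^2 := by
      have h1' : x^2 ≤ V 0 * Real.exp (-(2*a*t)) / m₁ := by
        rw [le_div_iff₀ hm₁0]; linarith [h1]
      calc x^2 ≤ V 0 * Real.exp (-(2*a*t)) / m₁ := h1'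
        _ = V 0 / m₁ * (Real.exp (-a*t) * Real.exp (-a*t)) := by rw [← hexp2]; ring
        _ = (R * Real.exp (-a*t))^2 := by rw [mul_pow, hRsq]; ring
    by_contra hcon
    push_neg at hcon
    nlinarith [h2, hcon, hx, mul_nonneg hR0 (Real.exp_pos (-a*t)).le]
  refine ⟨(3+kd)*R + 1, by positivity, a, ha0, ?_⟩
  intro t ht
  have hEb : ‖E t‖ ≤ R * Real.exp (-a*t) := by
    apply hkey t ht _ (norm_nonneg _)
    nlinarith [sq_nonneg ‖z t‖, sq_nonneg ‖w t‖]
  have hzb : ‖z t‖ ≤ R * Real.exp (-a*t) := by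
    apply hkey t ht _ (norm_nonneg _)
    nlinarith [sq_nonneg ‖E t‖, sq_nonneg ‖w t‖]
  have hwb : ‖w t‖ ≤ R * Real.exp (-a*t) := by
    apply hkey t ht _ (norm_nonneg _)
    nlinarith [sq_nonneg ‖z t‖, sq_nonneg ‖E t‖]
  have hvb : ‖deriv E t‖ ≤ ‖w t‖ + kd * ‖E t‖ := by
    have : deriv E t = w t - kd • E t := by simp only [hw]; abel
    rw [this]
    calc ‖w t - kd • E t‖ ≤ ‖w t‖ + ‖kd • E t‖ := norm_sub_le _ _
      _ = ‖w t‖ + kd * ‖E t‖ := by rw [norm_smul, Real.norm_eq_abs, abs_of_pos hkd]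
  have hzgoal : ‖EI t - c0‖ = ‖z t‖ := by simp only [hz]
  rw [hzgoal]
  have hexp0 : 0 < Real.exp (-a*t) := Real.exp_pos _
  calc ‖E t‖ + ‖deriv E t‖ + ‖z t‖
      ≤ ‖E t‖ + (‖w t‖ + kd * ‖E t‖) + ‖z t‖ := by linarith
    _ ≤ R * Real.exp (-a*t) + (R * Real.exp (-a*t) + kd * (R * Real.exp (-a*t)))
        + R * Real.exp (-a*t) := by
        have := mul_le_mul_of_nonneg_left hEb hkd.le
        linarith
    _ = (3+kd)*R * Real.exp (-a*t) := by ring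
    _ ≤ ((3+kd)*R + 1) * Real.exp (-a*t) := by nlinarith [hexp0]
end

section
/- Let μ > 0, let κ satisfy 0 < κ < 2/μ, and set δ := |κμ − 1| (so δ < 1). Let k_p, k_d, k_I > 0 be gains satisfying 0 < k_I < k_d³(1 − δ²)/μ and k_p > 2κ k_d². Then the symmetric 3×3 real matrix Q = [[k_I²/k_d, 0, −δ k_I], [0, (k_I/k_d²)(k_p − 2κ k_d²), 0], [−δ k_I, 0, k_d − μ k_I/k_d²]] is positive definite. -/
/-- **Positive definiteness of the Lyapunov matrix `Q`** arising in the geometric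
PID stability analysis, under the paper's gain conditions (11)–(12). -/
theorem lyapunov_Q_posDef (μ κ kp kd kI δ : ℝ)
    (hμ : 0 < μ) (hκ0 : 0 < κ) (hκ : κ < 2 / μ) (hδ : δ = |κ * μ - 1|)
    (hkp0 : 0 < kp) (hkd : 0 < kd) (hkI0 : 0 < kI)
    (hkI : kI < kd ^ 3 * (1 - δ ^ 2) / μ)
    (hkp : 2 * κ * kd ^ 2 < kp) :
    (!![kI ^ 2 / kd, 0, -(δ * kI);
        0, kI / kd ^ 2 * (kp - 2 * κ * kd ^ 2), 0;
        -(δ * kI), 0, kd - μ * kI / kd ^ 2] : Matrix (Fin 3) (Fin 3) ℝ).PosDef := by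
  have hδ0 : 0 ≤ δ := hδ ▸ abs_nonneg _
  have h1 : kI * μ < kd ^ 3 * (1 - δ ^ 2) := by
    rwa [lt_div_iff₀ hμ] at hkI
  have hA : 0 < kI ^ 2 / kd := by positivity
  have hD : 0 < kd - μ * kI / kd ^ 2 := by
    have hkd2 : (0:ℝ) < kd ^ 2 := by positivity
    rw [sub_pos, div_lt_iff₀ hkd2]
    nlinarith [sq_nonneg δ, sq_nonneg (δ * kd)]
  have hC : 0 < kI / kd ^ 2 * (kp - 2 * κ * kd ^ 2) := by
    have : 0 < kp - 2 * κ * kd ^ 2 := by linarith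
    positivity
  have key : 0 < kI ^ 2 / kd * (kd - μ * kI / kd ^ 2) - (δ * kI) ^ 2 := by
    have e : kI ^ 2 / kd * (kd - μ * kI / kd ^ 2) - (δ * kI) ^ 2
        = kI ^ 2 * (kd ^ 3 * (1 - δ ^ 2) - kI * μ) / kd ^ 3 := by
      field_simp
      ring
    rw [e]
    have : 0 < kd ^ 3 * (1 - δ ^ 2) - kI * μ := by linarith
    positivity
  rw [Matrix.posDef_iff_dotProduct_mulVec]
  constructor
  · ext i j
    fin_cases i <;> fin_cases j <;>
      simp [Matrix.conjTranspose_apply]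
  · intro x hx
    have h0 : x 0 ≠ 0 ∨ x 1 ≠ 0 ∨ x 2 ≠ 0 := by
      by_contra h
      push_neg at h
      exact hx (by ext i; fin_cases i <;> simp [h.1, h.2.1, h.2.2])
    simp only [dotProduct, Matrix.mulVec, Fin.sum_univ_three,
      Matrix.of_apply, Matrix.vecHead, Matrix.cons_val_zero, Matrix.cons_val_one, Matrix.head_cons,
      Matrix.cons_val_two, Matrix.tail_cons,
      RCLike.star_def, starRingEnd_apply, star_trivial,
      Matrix.cons_val', Matrix.empty_val', Matrix.cons_val_fin_one]
    set a := x 0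
    set b := x 1
    set c := x 2
    rcases h0 with ha | hb | hc2
    · nlinarith [sq_nonneg ((kd - μ * kI / kd ^ 2) * c - δ * kI * a),
        mul_pos key (mul_self_pos.2 ha), mul_nonneg hD.le (mul_nonneg hC.le (mul_self_nonneg b)), hD]
    · nlinarith [sq_nonneg ((kI ^ 2 / kd) * a - δ * kI * c),
        mul_nonneg key.le (mul_self_nonneg c),
        mul_pos hA (mul_pos hC (mul_self_pos.2 hb)), hA]
    · nlinarith [sq_nonneg ((kI ^ 2 / kd) * a - δ * kI * c),
        mul_pos key (mul_self_pos.2 hc2),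
        mul_nonneg hA.le (mul_nonneg hC.le (mul_self_nonneg b)), hA]
end

section
/- Let E be a real 3×3 matrix with Eᵀ E = I₃ and det E = 1 (i.e. E ∈ SO(3)), and let η_E ∈ ℝ³ be the unique vector whose hat is E − Eᵀ (this matrix is skew-symmetric). Then ‖η_E‖² ≤ 4 · trace(I₃ − E). Equivalently, with the error function V(E) = trace(I₃ − E) and its Riemannian gradient η_E, one has ‖η_E‖² ≤ 2 · (2 V(E)), i.e. the Morse constant λ = sup_{E ∈ SO(3)} ‖η_E‖²/(2V(E)) satisfies λ ≤ 2. -/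
open Matrix

/-- The hat map sending `Ω ∈ ℝ³` to the skew-symmetric matrix `Ω̂`. -/
def hat (Ω : EuclideanSpace ℝ (Fin 3)) : Matrix (Fin 3) (Fin 3) ℝ :=
  !![0, -Ω 2, Ω 1; Ω 2, 0, -Ω 0; -Ω 1, Ω 0, 0]

/-- **Quadratic lower bound for the error function on SO(3):** if `E ∈ SO(3)` and
`η` is the vector with `η̂ = E - Eᵀ` (the gradient of `V(E) = trace(I₃ - E)`), then
`‖η‖² ≤ 4 · trace(I₃ - E)`, i.e. the Morse constant `λ` satisfies `λ ≤ 2`. -/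
theorem gradient_quadratic_bound (E : Matrix (Fin 3) (Fin 3) ℝ)
    (horth : Eᵀ * E = 1) (hdet : E.det = 1)
    (η : EuclideanSpace ℝ (Fin 3)) (hη : hat η = E - Eᵀ) :
    ‖η‖ ^ 2 ≤ 4 * (1 - E).trace := by
  -- adjugate E = Eᵀ
  have hadj : E.adjugate = Eᵀ := by
    calc E.adjugate = (Eᵀ * E) * E.adjugate := by rw [horth, one_mul]
    _ = Eᵀ * (E * E.adjugate) := by rw [Matrix.mul_assoc]
    _ = Eᵀ := by rw [Matrix.mul_adjugate, hdet, one_smul, Matrix.mul_one]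
  have hadj3 := Matrix.adjugate_fin_three E
  -- entry equations
  have ha : Eᵀ 0 0 = E 1 1 * E 2 2 - E 1 2 * E 2 1 := by
    rw [← hadj, hadj3]; simp
  have he : Eᵀ 1 1 = E 0 0 * E 2 2 - E 0 2 * E 2 0 := by
    rw [← hadj, hadj3]; simp
  have hi : Eᵀ 2 2 = E 0 0 * E 1 1 - E 0 1 * E 1 0 := by
    rw [← hadj, hadj3]; simp
  simp only [Matrix.transpose_apply] at ha he hi
  -- column norms
  have h00 := congrFun (congrFun horth 0) 0
  have h11 := congrFun (congrFun horth 1) 1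
  have h22 := congrFun (congrFun horth 2) 2
  simp [Matrix.mul_apply, Fin.sum_univ_three, Matrix.one_apply] at h00 h11 h22
  -- η entries
  have hη0 : η 0 = E 2 1 - E 1 2 := by
    have := congrFun (congrFun hη 2) 1
    simp [hat] at this
    linarith
  have hη1 : η 1 = E 0 2 - E 2 0 := by
    have := congrFun (congrFun hη 0) 2
    simp [hat] at this
    linarith
  have hη2 : η 2 = E 1 0 - E 0 1 := by
    have := congrFun (congrFun hη 1) 0
    simp [hat] at this
    linarith
  have hnorm : ‖η‖ ^ 2 = η 0 ^ 2 + η 1 ^ 2 + η 2 ^ 2 := by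
    rw [EuclideanSpace.norm_eq, Real.sq_sqrt (by positivity)]
    simp [Fin.sum_univ_three, sq_abs]
  have htr : (1 - E).trace = 3 - (E 0 0 + E 1 1 + E 2 2) := by
    simp [Matrix.trace, Matrix.diag, Fin.sum_univ_three, Matrix.one_apply]
  rw [hnorm, htr, hη0, hη1, hη2]
  nlinarith [sq_nonneg (E 0 0 + E 1 1 + E 2 2 - 3), sq_nonneg (E 0 0 + E 1 1 + E 2 2 - 1)]
end

section
/- Let E : ℝ → Matrix (Fin 3) (Fin 3) ℝ and Ω : ℝ → ℝ³ be such that E is differentiable, E(t)ᵀ E(t) = I₃ for all t, and E′(t) = E(t) · Ω̂(t) for all t (attitude kinematics with body angular velocity Ω). For each t let η(t) ∈ ℝ³ be the unique vector with η̂(t) = E(t) − E(t)ᵀ. Then the error function t ↦ trace(I₃ − E(t)) is differentiable and d/dt [trace(I₃ − E(t))] = ⟨η(t), Ω(t)⟩ (the Euclidean inner product of η(t) and Ω(t)). -/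
open Matrix

attribute [local instance] Matrix.normedAddCommGroup Matrix.normedSpace

/-- **The vector `η` with `η̂ = E - Eᵀ` is the gradient of `V(E) = trace(I₃ - E)`:**
along any attitude trajectory `Ė = E Ω̂` with `Eᵀ E = I₃`, the error function
`t ↦ trace(I₃ - E(t))` is differentiable with derivative `⟨η(t), Ω(t)⟩`. -/
theorem deriv_error_function
    (E : ℝ → Matrix (Fin 3) (Fin 3) ℝ)
    (Ω η : ℝ → EuclideanSpace ℝ (Fin 3))
    (hE : Differentiable ℝ E)
    (horth : ∀ t, (E t)ᵀ * E t = 1)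
    (hkin : ∀ t, deriv E t = E t * hat (Ω t))
    (hη : ∀ t, hat (η t) = E t - (E t)ᵀ) :
    ∀ t : ℝ, HasDerivAt (fun s => (1 - E s).trace) ((inner ℝ (η t) (Ω t) : ℝ)) t := by
  intro t
  have hE' : HasDerivAt E (E t * hat (Ω t)) t := by
    have := (hE t).hasDerivAt
    rw [← hkin t]
    exact this
  have L := (Matrix.traceLinearMap (Fin 3) ℝ ℝ).toContinuousLinearMap
  have htr : HasDerivAt (fun s => (E s).trace) ((E t * hat (Ω t)).trace) t :=
    ((Matrix.traceLinearMap (Fin 3) ℝ ℝ).toContinuousLinearMap.hasFDerivAt.comp_hasDerivAt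
      t hE')
  have hsub : HasDerivAt (fun s => (1 - E s).trace)
      (-(E t * hat (Ω t)).trace) t := by
    have h2 : HasDerivAt (fun s => (1 : Matrix (Fin 3) (Fin 3) ℝ).trace - (E s).trace)
        (-(E t * hat (Ω t)).trace) t := htr.const_sub _
    simpa [Matrix.trace_sub] using h2
  have key : (inner ℝ (η t) (Ω t) : ℝ) = -(E t * hat (Ω t)).trace := by
    have h0 := congrFun (congrFun (hη t) 0) 1
    have h1 := congrFun (congrFun (hη t) 0) 2
    have h2 := congrFun (congrFun (hη t) 1) 2
    simp [hat, Matrix.sub_apply, Matrix.transpose_apply] at h0 h1 h2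
    simp [PiLp.inner_apply, Matrix.trace, Matrix.diag, Matrix.mul_apply, hat,
      Fin.sum_univ_three]
    linear_combination (-(Ω t 0)) * h2 + (Ω t 1) * h1 + (-(Ω t 2)) * h0
  rw [key]
  exact hsub
end
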